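/- Let p(z) be a complex polynomial of degree n, and suppose that k of its zeros (counted with multiplicity, 1 ≤ k ≤ n) lie in the closed unit disc |z| ≤ 1. Then the (k-1)-th derivative p^{(k-1)}(z) has at least one zero in the closed disc |z| ≤ 2(n-k+1)/ln 2. -/

import Mathlib

open Polynomial intervalIntegral

private lemma leibniz_iter (a : ℂ) (g : Polynomial ℂ) : ∀ m : ℕ,
    derivative^[m+1] ((X - C a) * g)
      = (X - C a) * derivative^[m+1] g + ((m : Polynomial ℂ) + 1) * derivative^[m] g := by
  intro m
  induction m with
  | zero => simp [derivative_mul]; ring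
  | succ m ih =>
      rw [Function.iterate_succ_apply', ih, derivative_add, derivative_mul, derivative_mul,
        derivative_sub, derivative_X, derivative_C,
        ← Function.iterate_succ_apply' derivative (m+1) g,
        ← Function.iterate_succ_apply' derivative m g]
      have : derivative ((m : Polynomial ℂ) + 1) = 0 := by
        simp
      rw [this]
      push_cast
      ring

private lemma keyA (g : Polynomial ℂ) (z₀ w : ℂ) (m : ℕ) :
    eval w (derivative^[m] g)
      = ∫ t in (0:ℝ)..1, ((t:ℂ))^m *
          eval (z₀ + (t:ℂ) * (w - z₀)) (derivative^[m+1] ((X - C z₀) * g)) := by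
  set H : Polynomial ℂ :=
    X^(m+1) * (derivative^[m] g).comp (C z₀ + X * C (w - z₀)) with hH
  have hs : ∀ s : ℂ, eval s (derivative H)
      = s^m * eval (z₀ + s * (w - z₀)) (derivative^[m+1] ((X - C z₀) * g)) := by
    intro s
    rw [leibniz_iter]
    simp only [hH, derivative_mul, derivative_pow, derivative_X, derivative_comp,
      derivative_add, derivative_C, eval_add, eval_mul, eval_pow, eval_comp, eval_X,
      eval_C, eval_sub, Nat.add_sub_cancel, eval_natCast, eval_one, zero_add, zero_mul,
      mul_one, Nat.cast_add, Nat.cast_one, eval_zero, mul_zero, zero_mul]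
    rw [Function.iterate_succ_apply' derivative m g]
    ring
  have hderiv : ∀ t : ℝ, HasDerivAt (fun t : ℝ => eval (t:ℂ) H) (eval (t:ℂ) (derivative H)) t :=
    fun t => (H.hasDerivAt (t:ℂ)).comp_ofReal
  have hcont : Continuous fun t : ℝ => eval (t:ℂ) (derivative H) :=
    (derivative H).continuous_aeval.comp Complex.continuous_ofReal
  have h1 : (∫ t in (0:ℝ)..1, eval (t:ℂ) (derivative H))
      = eval (1:ℂ) H - eval (0:ℂ) H :=
    integral_eq_sub_of_hasDerivAt (fun t _ => hderiv t) (hcont.intervalIntegrable 0 1)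
  have h2 : eval (1:ℂ) H = eval w (derivative^[m] g) := by
    simp only [hH, eval_mul, eval_pow, eval_comp, eval_add, eval_X, eval_C, one_pow, one_mul]
    congr 1
    ring
  have h3 : eval (0:ℂ) H = 0 := by
    simp [hH]
  have h4 : (∫ t in (0:ℝ)..1, ((t:ℂ))^m *
        eval (z₀ + (t:ℂ) * (w - z₀)) (derivative^[m+1] ((X - C z₀) * g)))
      = ∫ t in (0:ℝ)..1, eval (t:ℂ) (derivative H) :=
    intervalIntegral.integral_congr (fun t _ => (hs (t:ℂ)).symm)
  rw [h4, h1, h2, h3, sub_zero]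

private lemma keyL : ∀ (k : ℕ) (f : Polynomial ℂ) (z : Fin (k+1) → ℂ),
    (∀ i, ‖z i‖ ≤ 1) →
    (∏ i, (X - C (z i))) ∣ f →
    (∀ w : ℂ, ‖w‖ ≤ 1 → 0 < (eval w (derivative^[k] f)).re) → False := by
  intro k
  induction k with
  | zero =>
      intro f z hz hdvd hpos
      obtain ⟨c, hc⟩ := hdvd
      have h0 := hpos (z 0) (hz 0)
      rw [hc] at h0
      simp [Fin.prod_univ_one] at h0
  | succ k ih =>
      intro f z hz hdvd hpos
      obtain ⟨c, hc⟩ := hdvd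
      set g : Polynomial ℂ := (∏ i : Fin (k+1), (X - C (z i.succ))) * c with hg
      have hf : f = (X - C (z 0)) * g := by
        rw [hc, hg, Fin.prod_univ_succ]; ring
      refine ih g (fun i => z i.succ) (fun i => hz _) ⟨c, rfl⟩ ?_
      intro w hw
      have hid := keyA g (z 0) w k
      rw [← hf] at hid
      rw [hid]
      -- real part of the interval integral
      have hcont : Continuous fun t : ℝ =>
          ((t:ℂ))^k * eval (z 0 + (t:ℂ) * (w - z 0)) (derivative^[k+1] f) := by
        apply Continuous.mul
        · exact (continuous_pow k).comp Complex.continuous_ofReal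
        · exact ((derivative^[k+1] f).continuous_aeval).comp
            (by continuity)
      have hre : ((∫ t in (0:ℝ)..1, ((t:ℂ))^k *
            eval (z 0 + (t:ℂ) * (w - z 0)) (derivative^[k+1] f)).re)
          = ∫ t in (0:ℝ)..1, (((t:ℂ))^k *
            eval (z 0 + (t:ℂ) * (w - z 0)) (derivative^[k+1] f)).re :=
        (Complex.reCLM.intervalIntegral_comp_comm (hcont.intervalIntegrable 0 1)).symm
      rw [hre]
      apply intervalIntegral_pos_of_pos_on
      · exact ((Complex.continuous_re.comp hcont).intervalIntegrable 0 1)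
      · intro t ht
        have hin : ‖z 0 + (t:ℂ) * (w - z 0)‖ ≤ 1 := by
          have : z 0 + (t:ℂ) * (w - z 0) = (1 - (t:ℂ)) * z 0 + (t:ℂ) * w := by ring
          rw [this]
          calc ‖(1 - (t:ℂ)) * z 0 + (t:ℂ) * w‖
              ≤ ‖(1 - (t:ℂ)) * z 0‖ + ‖(t:ℂ) * w‖ :=
                norm_add_le _ _
            _ = |1 - t| * ‖z 0‖ + |t| * ‖w‖ := by
                rw [show (1 - (t:ℂ)) = ((1 - t : ℝ) : ℂ) by push_cast; ring, norm_mul, norm_mul,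
                  Complex.norm_real, Complex.norm_real, Real.norm_eq_abs, Real.norm_eq_abs]
            _ ≤ (1 - t) * 1 + t * 1 := by
                rw [abs_of_nonneg (by linarith [ht.1, ht.2] : (0:ℝ) ≤ 1 - t),
                  abs_of_nonneg (le_of_lt ht.1)]
                gcongr
                · linarith [ht.2]
                · exact hz 0
                · exact ht.1.le
            _ = 1 := by ring
        have hP := hpos _ hin
        have : ((((t:ℝ))^k : ℝ) : ℂ) = ((t:ℂ))^k := by push_cast; ring
        rw [← this, Complex.re_ofReal_mul]
        exact mul_pos (pow_pos ht.1 k) hP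
      · norm_num

private lemma prod_close_to_one (a : ℝ) (ha : 0 ≤ a) :
    ∀ s : Multiset ℂ, (∀ v ∈ s, ‖v - 1‖ ≤ a) →
      ‖s.prod - 1‖ ≤ (1 + a) ^ (Multiset.card s) - 1 := by
  intro s
  induction s using Multiset.induction_on with
  | empty => intro _; simp
  | cons v s ih =>
      intro h
      have hv : ‖v - 1‖ ≤ a := h v (Multiset.mem_cons_self v s)
      have hs := ih (fun u hu => h u (Multiset.mem_cons_of_mem hu))
      have hvab : ‖v‖ ≤ 1 + a := by
        calc ‖v‖ = ‖(v - 1) + 1‖ := by ring_nf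
          _ ≤ ‖v - 1‖ + 1 := by
              simpa using norm_add_le (v - 1) 1
          _ ≤ 1 + a := by linarith
      have key : (v ::ₘ s).prod - 1 = v * (s.prod - 1) + (v - 1) := by
        rw [Multiset.prod_cons]; ring
      rw [key, Multiset.card_cons]
      calc ‖v * (s.prod - 1) + (v - 1)‖
          ≤ ‖v‖ * ‖s.prod - 1‖ + ‖v - 1‖ := by
            simpa [map_mul] using norm_add_le (v * (s.prod - 1)) (v - 1)
        _ ≤ (1 + a) * ((1 + a) ^ (Multiset.card s) - 1) + a := by
            have h1 : (0:ℝ) ≤ ‖s.prod - 1‖ := (norm_nonneg _)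
            have h2 : (0:ℝ) ≤ 1 + a := by linarith
            nlinarith [norm_nonneg v]
        _ = (1 + a) ^ (Multiset.card s + 1) - 1 := by ring

/-- **Kakeya-type theorem (zeros with multiplicity).**
If `p` is a complex polynomial of degree `n ≥ 1` and `k` of its zeros (counted with
multiplicity, `1 ≤ k ≤ n`) lie in the closed unit disc, then `p^{(k-1)}` has at least
one zero in the closed disc `|z| ≤ 2(n-k+1)/ln 2`. -/
theorem kakeya_closed_disc (n k : ℕ) (hn : 1 ≤ n) (hk1 : 1 ≤ k) (hkn : k ≤ n)
    (p q : Polynomial ℂ) (hp : p.natDegree = n)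
    (z : Fin k → ℂ) (hz : ∀ i, ‖z i‖ ≤ 1)
    (hfac : p = (∏ i, (X - C (z i))) * q) :
    ∃ w : ℂ, (derivative^[k - 1] p).IsRoot w ∧
      ‖w‖ ≤ 2 * ((n : ℝ) - k + 1) / Real.log 2 := by
  by_contra hcon
  push_neg at hcon
  obtain ⟨k', rfl⟩ : ∃ k', k = k' + 1 := ⟨k - 1, (Nat.succ_pred_eq_of_pos hk1).symm⟩
  simp only [Nat.add_sub_cancel] at hcon
  set P : Polynomial ℂ := derivative^[k'] p with hPdef
  set R : ℝ := 2 * ((n : ℝ) - (k' + 1 : ℕ) + 1) / Real.log 2 with hRdef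
  set m' : ℕ := n - k' with hm'def
  have hk'n : k' < n := Nat.lt_of_lt_of_le (Nat.lt_succ_self k') hkn
  have hm1 : 1 ≤ m' := Nat.le_sub_of_add_le (by omega)
  have hmcast : ((m' : ℝ)) = (n : ℝ) - (k' + 1 : ℕ) + 1 := by
    push_cast [hm'def, Nat.cast_sub hk'n.le]
    ring
  have hlog : 0 < Real.log 2 := Real.log_pos (by norm_num)
  have hmpos : (0:ℝ) < m' := by exact_mod_cast hm1
  have hRpos : 0 < R := by
    rw [hRdef, ← hmcast]
    positivity
  have hroot : ∀ w : ℂ, P.IsRoot w → R < ‖w‖ := hcon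
  have hP0 : eval 0 P ≠ 0 := by
    intro h
    have := hroot 0 h
    simp at this
    linarith
  have hPne : P ≠ 0 := fun h => hP0 (by simp [h])
  -- roots structure
  have hsplits : P.Splits := IsAlgClosed.splits P
  have hfacP := hsplits.eq_prod_roots
  have hcard : Multiset.card P.roots ≤ m' := by
    refine le_trans (P.card_roots' ) ?_
    calc P.natDegree ≤ p.natDegree - k' := natDegree_iterate_derivative p k'
      _ = m' := by rw [hp]
  have hrR : ∀ r ∈ P.roots, R < ‖r‖ := fun r hr =>
    hroot r (isRoot_of_mem_roots hr)
  have hrne : ∀ r ∈ P.roots, r ≠ 0 := by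
    intro r hr h0
    have := hrR r hr
    rw [h0] at this
    simp at this
    linarith
  -- evaluation identity
  have heval : ∀ w : ℂ, eval w P
      = P.leadingCoeff * ((P.roots.map (fun r => w - r)).prod) := by
    intro w
    conv_lhs => rw [hfacP]
    rw [eval_mul, eval_C, eval_multiset_prod, Multiset.map_map]
    congr 1
    refine congrArg Multiset.prod (Multiset.map_congr rfl ?_)
    intro r _
    simp
  have hM : ∀ w : ℂ, eval w P = eval 0 P * ((P.roots.map (fun r => 1 - w / r)).prod) := by
    intro w
    rw [heval w, heval 0]
    have : (P.roots.map (fun r => w - r)).prod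
        = (P.roots.map (fun r => (0 - r) * (1 - w / r))).prod := by
      congr 1
      apply Multiset.map_congr rfl
      intro r hr
      field_simp [hrne r hr]
      ring
    rw [this, Multiset.prod_map_mul]
    ring
  -- real part positivity of M w
  have hMre : ∀ w : ℂ, ‖w‖ ≤ 1 →
      0 < ((P.roots.map (fun r => 1 - w / r)).prod).re := by
    intro w hw
    set M := (P.roots.map (fun r => 1 - w / r)).prod with hMdef
    have hbound : ‖M - 1‖ ≤ (1 + 1/R) ^ (Multiset.card P.roots) - 1 := by
      rw [hMdef, ← Multiset.card_map (fun r => 1 - w / r) P.roots]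
      apply prod_close_to_one (1/R) (by positivity)
      intro v hv
      obtain ⟨r, hr, rfl⟩ := Multiset.mem_map.mp hv
      have h1 : ‖1 - w / r - 1‖ = ‖w‖ / ‖r‖ := by
        rw [show (1 - w / r - 1) = -(w/r) by ring, norm_neg, norm_div]
      rw [h1]
      exact div_le_div₀ (by norm_num) hw hRpos (hrR r hr).le
    have hlt : (1 + 1/R) ^ (Multiset.card P.roots) - 1 < 1 := by
      have h2 : (1 + 1/R) ^ (Multiset.card P.roots) ≤ (1 + 1/R) ^ m' :=
        pow_le_pow_right₀ (by nlinarith [one_div_pos.mpr hRpos]) hcard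
      have h3 : (1 + 1/R) ^ m' ≤ Real.exp (1/R) ^ m' := by
        apply pow_le_pow_left₀ (by positivity)
        linarith [Real.add_one_le_exp (1/R)]
      rw [← Real.exp_nat_mul] at h3
      have h4 : (m' : ℝ) * (1/R) = Real.log 2 / 2 := by
        rw [hRdef, ← hmcast]
        field_simp
      rw [h4] at h3
      have h5 : Real.exp (Real.log 2 / 2) < 2 := by
        have := Real.exp_lt_exp.mpr (show Real.log 2 / 2 < Real.log 2 by linarith)
        rwa [Real.exp_log (by norm_num)] at this
      linarith
    have habs : ‖M - 1‖ < 1 := lt_of_le_of_lt hbound hlt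
    have hrebd : |(M - 1).re| ≤ ‖M - 1‖ := Complex.abs_re_le_norm _
    have : M.re = (M - 1).re + 1 := by simp [Complex.sub_re]
    rw [this]
    have := abs_le.mp hrebd
    linarith
  -- apply the key lemma
  set a : ℂ := (eval 0 P)⁻¹ with hadef
  apply keyL k' (C a * p) z hz
  · exact ⟨C a * q, by rw [hfac]; ring⟩
  · intro w hw
    rw [iterate_derivative_C_mul, eval_mul, eval_C, ← hPdef, hM w, hadef,
      inv_mul_cancel_left₀ hP0]
    exact hMre w hw
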